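/- Let F be monic of degree d over Z with discriminant D, p a prime not dividing D, and F(μ_1) ≡ 0 (mod p). For each k ≥ 1 let μ_k mod p^k be the unique residue class (given by Hensel's lemma) with F(μ_k) ≡ 0 (mod p^k) and μ_k ≡ μ_1 (mod p). Let P be the ideal of R = Z[X]/(F) corresponding to μ_1 mod p. Then for every k ≥ 1, the ideal P^k corresponds to μ_k mod p^k, i.e., P^k is the Z-span of {α^j − μ_k^j : 1 ≤ j ≤ d−1} ∪ {p^k}. -/

import Mathlib

/-- The ℤ-submodule of `ℤ[X]/(F)` spanned by `α^j - μ^j` for `1 ≤ j < d`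
together with `m`, associated to a root `μ mod m` of `F`. -/
noncomputable def rootSpan (F : Polynomial ℤ) (d : ℕ) (m μ : ℤ) : Submodule ℤ (AdjoinRoot F) :=
  Submodule.span ℤ
    ({(m : AdjoinRoot F)} ∪
      (fun j : ℕ => AdjoinRoot.root F ^ j - (μ : AdjoinRoot F) ^ j) '' Set.Ico 1 d)

open Polynomial

/-- `rootSpan` is the ideal generated by `m` and `α - μ`, provided `m ∣ F(μ)`. -/
lemma rootSpan_eq_ideal {F : Polynomial ℤ} {d : ℕ} (hd : 2 ≤ d) (hF : F.Monic)
    (hdeg : F.natDegree = d) {m μ : ℤ} (hm : m ∣ F.eval μ) :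
    rootSpan F d m μ =
      (Ideal.span {(m : AdjoinRoot F), AdjoinRoot.root F - (μ : AdjoinRoot F)}).restrictScalars ℤ := by
  subst hdeg
  set α := AdjoinRoot.root F with hα
  set S := rootSpan F F.natDegree m μ with hS
  set I := Ideal.span {(m : AdjoinRoot F), α - (μ : AdjoinRoot F)} with hI
  have hmI : (m : AdjoinRoot F) ∈ I := Ideal.subset_span (Set.mem_insert _ _)
  have hαI : α - (μ : AdjoinRoot F) ∈ I :=
    Ideal.subset_span (Set.mem_insert_of_mem _ rfl)
  -- basic membership facts for S
  have hmS : (m : AdjoinRoot F) ∈ S :=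
    Submodule.subset_span (Set.mem_union_left _ rfl)
  have key0 : ∀ i : ℕ, i < F.natDegree → α ^ i - (μ : AdjoinRoot F) ^ i ∈ S := by
    intro i hi
    rcases Nat.eq_zero_or_pos i with h0 | h1
    · subst h0; simp
    · exact Submodule.subset_span (Set.mem_union_right _ ⟨i, ⟨h1, hi⟩, rfl⟩)
  have hFμS : ((F.eval μ : ℤ) : AdjoinRoot F) ∈ S := by
    obtain ⟨t, ht⟩ := hm
    rw [ht]
    have := S.smul_mem t hmS
    simpa [zsmul_eq_mul, mul_comm] using this
  have key_d : α ^ F.natDegree - (μ : AdjoinRoot F) ^ F.natDegree ∈ S := by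
    have h0 : (aeval α) F = 0 := by
      rw [hα, AdjoinRoot.aeval_eq, AdjoinRoot.mk_self]
    have h1 : (aeval α) F = ∑ i ∈ Finset.range (F.natDegree + 1), F.coeff i • α ^ i :=
      Polynomial.aeval_eq_sum_range (p := F) α
    have h2 : ((F.eval μ : ℤ) : AdjoinRoot F)
        = ∑ i ∈ Finset.range (F.natDegree + 1), F.coeff i • ((μ : AdjoinRoot F)) ^ i := by
      rw [Polynomial.eval_eq_sum_range]
      push_cast
      simp [zsmul_eq_mul]
    have E : ∑ i ∈ Finset.range (F.natDegree + 1),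
        F.coeff i • (α ^ i - (μ : AdjoinRoot F) ^ i) = - ((F.eval μ : ℤ) : AdjoinRoot F) := by
      have : ∑ i ∈ Finset.range (F.natDegree + 1), F.coeff i • (α ^ i - (μ : AdjoinRoot F) ^ i)
          = (∑ i ∈ Finset.range (F.natDegree + 1), F.coeff i • α ^ i)
            - ∑ i ∈ Finset.range (F.natDegree + 1), F.coeff i • ((μ : AdjoinRoot F)) ^ i := by
        rw [← Finset.sum_sub_distrib]
        exact Finset.sum_congr rfl fun i _ => smul_sub _ _ _
      rw [this, ← h1, ← h2, h0, zero_sub]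
    have hsplit : α ^ F.natDegree - (μ : AdjoinRoot F) ^ F.natDegree
        = (∑ i ∈ Finset.range (F.natDegree + 1), F.coeff i • (α ^ i - (μ : AdjoinRoot F) ^ i))
          - ∑ i ∈ Finset.range F.natDegree, F.coeff i • (α ^ i - (μ : AdjoinRoot F) ^ i) := by
      rw [Finset.sum_range_succ, hF.coeff_natDegree, one_smul]
      ring
    rw [hsplit]
    refine sub_mem ?_ (Submodule.sum_mem _ fun i hi => ?_)
    · rw [E]; exact neg_mem hFμS
    · exact Submodule.smul_mem _ _ (key0 i (Finset.mem_range.1 hi))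
  have key_le : ∀ i : ℕ, i ≤ F.natDegree → α ^ i - (μ : AdjoinRoot F) ^ i ∈ S := by
    intro i hi
    rcases lt_or_eq_of_le hi with h | h
    · exact key0 i h
    · subst h; exact key_d
  -- closure of S under multiplication by any ring element against the two generators
  have hdim : (AdjoinRoot.powerBasis' hF).dim = F.natDegree := rfl
  have hspan_top : Submodule.span ℤ
      (Set.range fun i : Fin (AdjoinRoot.powerBasis' hF).dim => α ^ (i : ℕ)) = ⊤ := by
    have hb : Set.range (fun i : Fin (AdjoinRoot.powerBasis' hF).dim => α ^ (i : ℕ))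
        = Set.range ⇑(AdjoinRoot.powerBasis' hF).basis := by
      apply congrArg Set.range
      exact ((AdjoinRoot.powerBasis' hF).coe_basis).symm
    rw [hb]
    exact (AdjoinRoot.powerBasis' hF).basis.span_eq
  have mulmem : ∀ r : AdjoinRoot F,
      r * (m : AdjoinRoot F) ∈ S ∧ r * (α - (μ : AdjoinRoot F)) ∈ S := by
    intro r
    have hr : r ∈ Submodule.span ℤ
        (Set.range fun i : Fin (AdjoinRoot.powerBasis' hF).dim => α ^ (i : ℕ)) := by
      rw [hspan_top]; exact Submodule.mem_top
    refine Submodule.span_induction ?_ ?_ ?_ ?_ hr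
    · rintro x ⟨i, rfl⟩
      have hilt : (i : ℕ) < F.natDegree := lt_of_lt_of_le i.2 (le_of_eq hdim)
      constructor
      · have heq : α ^ (i : ℕ) * (m : AdjoinRoot F)
            = m • (α ^ (i : ℕ) - (μ : AdjoinRoot F) ^ (i : ℕ)) + (μ ^ (i : ℕ)) • ((m : AdjoinRoot F)) := by
          simp only [zsmul_eq_mul]
          push_cast
          ring
        rw [heq]
        exact add_mem (Submodule.smul_mem _ _ (key0 _ hilt)) (Submodule.smul_mem _ _ hmS)
      · have heq : α ^ (i : ℕ) * (α - (μ : AdjoinRoot F))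
            = (α ^ ((i : ℕ) + 1) - (μ : AdjoinRoot F) ^ ((i : ℕ) + 1))
              - μ • (α ^ (i : ℕ) - (μ : AdjoinRoot F) ^ (i : ℕ)) := by
          simp only [zsmul_eq_mul]
          push_cast
          ring
        rw [heq]
        exact sub_mem (key_le _ hilt) (Submodule.smul_mem _ _ (key0 _ hilt))
    · simp
    · intro x y _ _ hx hy
      exact ⟨by rw [add_mul]; exact add_mem hx.1 hy.1,
        by rw [add_mul]; exact add_mem hx.2 hy.2⟩
    · intro t x _ hx
      exact ⟨by rw [smul_mul_assoc]; exact Submodule.smul_mem _ _ hx.1,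
        by rw [smul_mul_assoc]; exact Submodule.smul_mem _ _ hx.2⟩
  apply le_antisymm
  · rw [hS, rootSpan]
    apply Submodule.span_le.2
    rintro x (rfl | ⟨j, ⟨hj1, hj2⟩, rfl⟩)
    · exact hmI
    · obtain ⟨c, hc⟩ := sub_dvd_pow_sub_pow α ((μ : AdjoinRoot F)) j
      simp only [Submodule.restrictScalars_mem]
      rw [hc]
      exact Ideal.mul_mem_right c _ hαI
  · intro x hx
    simp only [Submodule.restrictScalars_mem, hI] at hx
    obtain ⟨u, v, huv⟩ := Ideal.mem_span_pair.1 hx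
    rw [← huv]
    exact add_mem (mulmem u).1 (mulmem v).2

/-- Uniqueness of the Hensel lift: two roots of `F` mod `p^k` that agree with
`μ1` mod `p` agree mod `p^k`. -/
lemma hensel_unique {F : Polynomial ℤ} {p : ℤ} (hp : Prime p) {μ1 a b : ℤ}
    (hsep : ¬ p ∣ F.derivative.eval μ1)
    (ha1 : p ∣ a - μ1) (hb1 : p ∣ b - μ1) {k : ℕ}
    (ha : p ^ k ∣ F.eval a) (hb : p ^ k ∣ F.eval b) :
    p ^ k ∣ b - a := by
  obtain ⟨c, hc⟩ := F.binomExpansion a (b - a)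
  rw [add_sub_cancel] at hc
  have h1 : p ^ k ∣ (b - a) * (F.derivative.eval a + c * (b - a)) := by
    have heq : (b - a) * (F.derivative.eval a + c * (b - a)) = F.eval b - F.eval a := by
      linear_combination -hc
    rw [heq]
    exact dvd_sub hb ha
  have hM : ¬ p ∣ F.derivative.eval a + c * (b - a) := by
    intro h
    apply hsep
    have h2 : p ∣ F.derivative.eval a - F.derivative.eval μ1 :=
      dvd_trans ha1 (sub_dvd_eval_sub a μ1 F.derivative)
    have h3 : p ∣ b - a := by
      have := dvd_sub hb1 ha1
      simpa using this
    have h4 := dvd_sub (dvd_sub h h2) (h3.mul_left c)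
    have heq : F.derivative.eval a + c * (b - a) - (F.derivative.eval a - F.derivative.eval μ1)
        - c * (b - a) = F.derivative.eval μ1 := by ring
    rwa [heq] at h4
  have hco : IsCoprime (p ^ k) (F.derivative.eval a + c * (b - a)) :=
    (hp.coprime_iff_not_dvd.2 hM).pow_left
  exact hco.dvd_of_dvd_mul_right h1

lemma restrictScalars_pow_int {R : Type*} [CommRing R] (I : Ideal R) :
    ∀ k : ℕ, 1 ≤ k → (I.restrictScalars ℤ) ^ k = (I ^ k).restrictScalars ℤ := by
  intro k hk
  induction k with
  | zero => omega
  | succ n ih =>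
    rcases Nat.eq_zero_or_pos n with h0 | hn
    · subst h0; simp [pow_one]
    · rw [pow_succ, pow_succ, ih hn, Submodule.restrictScalars_mul]

/-- let `p` be a prime at which `F` is nondegenerate at the root
`μ₁ mod p` (i.e. `p ∤ F'(μ₁)`, which follows from `p` not dividing the
discriminant `D` of `F`), and let `μ_k mod p^k` be the Hensel lifts of
`μ₁ mod p`.  If `P` is the ideal corresponding to `μ₁ mod p`, then for every
`k ≥ 1` the ideal `P^k` is the ideal corresponding to `μ_k mod p^k`. -/
theorem stmt11 (d : ℕ) (hd : 2 ≤ d) (F : Polynomial ℤ) (hF : F.Monic)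
    (hdeg : F.natDegree = d)
    (p : ℕ) (hp : p.Prime) (μ1 : ℤ)
    (hroot : (p : ℤ) ∣ F.eval μ1)
    (hsep : ¬ (p : ℤ) ∣ F.derivative.eval μ1)
    (μs : ℕ → ℤ) (hμs1 : μs 1 = μ1)
    (hμs : ∀ k : ℕ, 1 ≤ k →
      ((p : ℤ) ^ k ∣ F.eval (μs k) ∧ μs k ≡ μ1 [ZMOD (p : ℤ)])) :
    ∀ k : ℕ, 1 ≤ k →
      (rootSpan F d (p : ℤ) μ1) ^ k = rootSpan F d ((p : ℤ) ^ k) (μs k) := by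
  have hpZ : Prime ((p : ℤ)) := Nat.prime_iff_prime_int.1 hp
  set α := AdjoinRoot.root F with hα
  -- μ_k ≡ μ1 (mod p) as divisibilities
  have hdvd1 : ∀ k : ℕ, 1 ≤ k → (p : ℤ) ∣ μs k - μ1 := by
    intro k hk
    exact dvd_sub_comm.1 ((hμs k hk).2).dvd
  -- the ideal-level statement
  have key : ∀ k : ℕ, 1 ≤ k →
      (Ideal.span {((p : ℤ) : AdjoinRoot F), α - (μ1 : AdjoinRoot F)}) ^ k
        = Ideal.span {(((p : ℤ) ^ k : ℤ) : AdjoinRoot F), α - ((μs k : ℤ) : AdjoinRoot F)} := by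
    intro k hk
    induction k with
    | zero => omega
    | succ n ih =>
      rcases Nat.eq_zero_or_pos n with h0 | hn
      · subst h0
        rw [pow_one, hμs1]
        norm_num
      · specialize ih hn
        set P := Ideal.span {((p : ℤ) : AdjoinRoot F), α - (μ1 : AdjoinRoot F)} with hP
        set Qn := Ideal.span
          {(((p : ℤ) ^ n : ℤ) : AdjoinRoot F), α - ((μs n : ℤ) : AdjoinRoot F)} with hQn
        set T := Ideal.span
          {(((p : ℤ) ^ (n + 1) : ℤ) : AdjoinRoot F), α - ((μs (n + 1) : ℤ) : AdjoinRoot F)} with hT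
        rw [pow_succ, ih]
        -- basic generators
        have hpP : ((p : ℤ) : AdjoinRoot F) ∈ P := Ideal.subset_span (Set.mem_insert _ _)
        have hb1P : α - (μ1 : AdjoinRoot F) ∈ P := Ideal.subset_span (Set.mem_insert_of_mem _ rfl)
        have hqQn : (((p : ℤ) ^ n : ℤ) : AdjoinRoot F) ∈ Qn := Ideal.subset_span (Set.mem_insert _ _)
        have hbnQn : α - ((μs n : ℤ) : AdjoinRoot F) ∈ Qn :=
          Ideal.subset_span (Set.mem_insert_of_mem _ rfl)
        have hqT : (((p : ℤ) ^ (n + 1) : ℤ) : AdjoinRoot F) ∈ T :=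
          Ideal.subset_span (Set.mem_insert _ _)
        have hβT : α - ((μs (n + 1) : ℤ) : AdjoinRoot F) ∈ T :=
          Ideal.subset_span (Set.mem_insert_of_mem _ rfl)
        -- congruences
        obtain ⟨t, ht⟩ := hdvd1 (n + 1) (by omega)     -- μ_{n+1} - μ1 = p * t
        obtain ⟨w, hw⟩ : ((p : ℤ)) ^ n ∣ μs (n + 1) - μs n := by
          refine hensel_unique hpZ hsep (hdvd1 n hn) (hdvd1 (n + 1) (by omega))
            (hμs n hn).1 (dvd_trans (pow_dvd_pow _ (by omega)) (hμs (n + 1) (by omega)).1)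
        -- memberships of β in Qn and P
        set β := α - ((μs (n + 1) : ℤ) : AdjoinRoot F) with hβ
        have hβQn : β ∈ Qn := by
          have heq : β = (α - ((μs n : ℤ) : AdjoinRoot F))
              - ((w : ℤ) : AdjoinRoot F) * (((p : ℤ) ^ n : ℤ) : AdjoinRoot F) := by
            rw [hβ]
            have : ((μs (n + 1) : ℤ) : AdjoinRoot F)
                = ((μs n : ℤ) : AdjoinRoot F) + ((w : ℤ) : AdjoinRoot F) * (((p : ℤ) ^ n : ℤ) : AdjoinRoot F) := by
              have : (μs (n + 1) : ℤ) = μs n + (p : ℤ) ^ n * w := by linarith [hw]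
              rw [this]; push_cast; ring
            rw [this]; ring
          rw [heq]
          exact sub_mem hbnQn (Ideal.mul_mem_left _ _ hqQn)
        have hβP : β ∈ P := by
          have heq : β = (α - (μ1 : AdjoinRoot F))
              - ((t : ℤ) : AdjoinRoot F) * (((p : ℤ)) : AdjoinRoot F) := by
            rw [hβ]
            have : (μs (n + 1) : ℤ) = μ1 + (p : ℤ) * t := by linarith [ht]
            rw [this]; push_cast; ring
          rw [heq]
          exact sub_mem hb1P (Ideal.mul_mem_left _ _ hpP)
        -- membership helpers in T
        have h2T : (((p : ℤ) ^ n : ℤ) : AdjoinRoot F) * (α - (μ1 : AdjoinRoot F)) ∈ T := by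
          have heq : (((p : ℤ) ^ n : ℤ) : AdjoinRoot F) * (α - (μ1 : AdjoinRoot F))
              = (((p : ℤ) ^ n : ℤ) : AdjoinRoot F) * β
                + ((t : ℤ) : AdjoinRoot F) * (((p : ℤ) ^ (n + 1) : ℤ) : AdjoinRoot F) := by
            rw [hβ]
            have : (μ1 : ℤ) = μs (n + 1) - (p : ℤ) * t := by linarith [ht]
            rw [this]; push_cast; ring
          rw [heq]
          exact add_mem (Ideal.mul_mem_left _ _ hβT) (Ideal.mul_mem_left _ _ hqT)
        have h3T : (α - ((μs n : ℤ) : AdjoinRoot F)) * ((p : ℤ) : AdjoinRoot F) ∈ T := by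
          have heq : (α - ((μs n : ℤ) : AdjoinRoot F)) * ((p : ℤ) : AdjoinRoot F)
              = ((p : ℤ) : AdjoinRoot F) * β
                + ((w : ℤ) : AdjoinRoot F) * (((p : ℤ) ^ (n + 1) : ℤ) : AdjoinRoot F) := by
            rw [hβ]
            have : (μs n : ℤ) = μs (n + 1) - (p : ℤ) ^ n * w := by linarith [hw]
            rw [this]; push_cast; ring
          rw [heq]
          exact add_mem (Ideal.mul_mem_left _ _ hβT) (Ideal.mul_mem_left _ _ hqT)
        have h4T : (α - ((μs n : ℤ) : AdjoinRoot F)) * (α - (μ1 : AdjoinRoot F)) ∈ T := by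
          have heq : (α - ((μs n : ℤ) : AdjoinRoot F)) * (α - (μ1 : AdjoinRoot F))
              = (α - (μ1 : AdjoinRoot F)) * β
                + ((w : ℤ) : AdjoinRoot F)
                  * ((((p : ℤ) ^ n : ℤ) : AdjoinRoot F) * (α - (μ1 : AdjoinRoot F))) := by
            rw [hβ]
            have : (μs n : ℤ) = μs (n + 1) - (p : ℤ) ^ n * w := by linarith [hw]
            rw [this]; push_cast; ring
          rw [heq]
          exact add_mem (Ideal.mul_mem_left _ _ hβT) (Ideal.mul_mem_left _ _ h2T)
        apply le_antisymm
        · -- Qn * P ≤ T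
          rw [Ideal.mul_le]
          intro r hr s hs
          obtain ⟨a, b, hab⟩ := Ideal.mem_span_pair.1 hr
          obtain ⟨c, e, hce⟩ := Ideal.mem_span_pair.1 hs
          have heq : r * s = (a * c) * ((((p : ℤ) ^ n : ℤ) : AdjoinRoot F) * ((p : ℤ) : AdjoinRoot F))
              + (a * e) * ((((p : ℤ) ^ n : ℤ) : AdjoinRoot F) * (α - (μ1 : AdjoinRoot F)))
              + (b * c) * ((α - ((μs n : ℤ) : AdjoinRoot F)) * ((p : ℤ) : AdjoinRoot F))
              + (b * e) * ((α - ((μs n : ℤ) : AdjoinRoot F)) * (α - (μ1 : AdjoinRoot F))) := by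
            rw [← hab, ← hce]; ring
          rw [heq]
          have h1T : (((p : ℤ) ^ n : ℤ) : AdjoinRoot F) * ((p : ℤ) : AdjoinRoot F) ∈ T := by
            have : (((p : ℤ) ^ n : ℤ) : AdjoinRoot F) * ((p : ℤ) : AdjoinRoot F)
                = (((p : ℤ) ^ (n + 1) : ℤ) : AdjoinRoot F) := by push_cast; ring
            rw [this]; exact hqT
          exact add_mem (add_mem (add_mem (Ideal.mul_mem_left _ _ h1T)
            (Ideal.mul_mem_left _ _ h2T)) (Ideal.mul_mem_left _ _ h3T))
            (Ideal.mul_mem_left _ _ h4T)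
        · -- T ≤ Qn * P
          rw [hT, Ideal.span_le]
          rintro x (rfl | rfl)
          · have heq : (((p : ℤ) ^ (n + 1) : ℤ) : AdjoinRoot F)
                = (((p : ℤ) ^ n : ℤ) : AdjoinRoot F) * ((p : ℤ) : AdjoinRoot F) := by
              push_cast; ring
            rw [SetLike.mem_coe, heq]
            exact Ideal.mul_mem_mul hqQn hpP
          · rw [SetLike.mem_coe]
            -- the Hensel/Bezout argument
            set μ' := μs (n + 1) with hμ'
            have hdivF : F = C (F.eval μ') + (X - C μ') * (F /ₘ (X - C μ')) := by
              conv_lhs => rw [← modByMonic_add_div F (X - C μ')]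
              rw [modByMonic_X_sub_C_eq_C_eval]
            set G := F /ₘ (X - C μ') with hG
            have hGeval : G.eval μ' = F.derivative.eval μ' := by
              have h1 := congrArg derivative hdivF
              have h2 := congrArg (Polynomial.eval μ') h1
              simp [derivative_mul, derivative_sub] at h2
              linarith [h2]
            have hpG : ¬ (p : ℤ) ∣ G.eval μ' := by
              rw [hGeval]
              intro h
              apply hsep
              have h2 : (p : ℤ) ∣ F.derivative.eval μ' - F.derivative.eval μ1 :=
                dvd_trans (hdvd1 (n + 1) (by omega)) (sub_dvd_eval_sub μ' μ1 F.derivative)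
              have h3 := dvd_sub h h2
              have heq : F.derivative.eval μ' - (F.derivative.eval μ' - F.derivative.eval μ1)
                  = F.derivative.eval μ1 := by ring
              rwa [heq] at h3
            obtain ⟨u, v, huv⟩ := hpZ.coprime_iff_not_dvd.2 hpG
            -- 0 = F(μ') + β * G(α) in AdjoinRoot F
            have hzero : (0 : AdjoinRoot F)
                = ((F.eval μ' : ℤ) : AdjoinRoot F) + β * (aeval α G) := by
              have h0 : (aeval α) F = 0 := by
                rw [hα, AdjoinRoot.aeval_eq, AdjoinRoot.mk_self]
              have h1 := congrArg (aeval α) hdivF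
              rw [h0] at h1
              simpa [hβ, hμ', sub_mul] using h1
            -- G(α) = G(μ') + β * H
            obtain ⟨H, hH⟩ : ∃ H : AdjoinRoot F,
                aeval α G = ((G.eval μ' : ℤ) : AdjoinRoot F) + β * H := by
              have hdvd : β ∣ aeval α G - ((G.eval μ' : ℤ) : AdjoinRoot F) := by
                have h1 := sub_dvd_eval_sub α ((μ' : ℤ) : AdjoinRoot F)
                  (G.map (Int.castRingHom (AdjoinRoot F)))
                have h2 : (G.map (Int.castRingHom (AdjoinRoot F))).eval α = aeval α G := by
                  rw [eval_map, aeval_def]; exact congrArg (fun f => eval₂ f α G) (Subsingleton.elim _ _)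
                have h3 : (G.map (Int.castRingHom (AdjoinRoot F))).eval ((μ' : ℤ) : AdjoinRoot F)
                    = ((G.eval μ' : ℤ) : AdjoinRoot F) := by
                  rw [eval_map]
                  exact Polynomial.eval₂_at_apply (Int.castRingHom (AdjoinRoot F)) μ'
                rw [h2, h3] at h1
                exact h1
              obtain ⟨H, hH⟩ := hdvd
              exact ⟨H, by rw [← hH]; ring⟩
            -- F(μ') ∈ Qn * P
            obtain ⟨w', hw'⟩ := (hμs (n + 1) (by omega)).1
            have hFμ'mem : ((F.eval μ' : ℤ) : AdjoinRoot F) ∈ Qn * P := by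
              have heq : ((F.eval μ' : ℤ) : AdjoinRoot F)
                  = (((p : ℤ) ^ n : ℤ) : AdjoinRoot F)
                    * (((w' : ℤ) : AdjoinRoot F) * ((p : ℤ) : AdjoinRoot F)) := by
                rw [hw']; push_cast; ring
              rw [heq]
              exact Ideal.mul_mem_mul hqQn (Ideal.mul_mem_left _ _ hpP)
            -- split β via Bezout
            have hsplit : β = ((u : ℤ) : AdjoinRoot F) * (β * ((p : ℤ) : AdjoinRoot F))
                + ((v : ℤ) : AdjoinRoot F) * (((G.eval μ' : ℤ) : AdjoinRoot F) * β) := by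
              have h1 : ((u * (p : ℤ) + v * G.eval μ' : ℤ) : AdjoinRoot F) = 1 := by
                rw [huv]; exact Int.cast_one
              calc β = 1 * β := (one_mul β).symm
                _ = ((u * (p : ℤ) + v * G.eval μ' : ℤ) : AdjoinRoot F) * β := by rw [h1]
                _ = _ := by push_cast; ring
            rw [hsplit]
            apply add_mem
            · exact Ideal.mul_mem_left _ _ (Ideal.mul_mem_mul hβQn hpP)
            · have he : ((G.eval μ' : ℤ) : AdjoinRoot F) * β
                  = -((F.eval μ' : ℤ) : AdjoinRoot F) - β * (β * H) := by
                have h1 := hzero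
                rw [hH] at h1
                linear_combination -h1
              rw [he]
              refine Ideal.mul_mem_left _ _ (sub_mem (neg_mem hFμ'mem) ?_)
              exact Ideal.mul_mem_mul hβQn (Ideal.mul_mem_right _ _ hβP)
  -- transfer to rootSpan
  intro k hk
  have e1 := rootSpan_eq_ideal hd hF hdeg hroot
  have e2 := rootSpan_eq_ideal hd hF hdeg (hμs k hk).1
  rw [e1, e2, ← key k hk]
  exact restrictScalars_pow_int _ k hk
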